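/- (One-sided concentration of Bernoulli empirical means via the Kearns–Saul bound.) Let X₁, …, X_n be i.i.d. Bernoulli random variables with mean μ ∈ (0,1), μ ≠ 1/2, on a probability space. Then for every δ ∈ (0,1): P( (1/n)·∑_{i=1}^n X_i − μ ≥ √(2·g̲(μ)·log(1/δ)/n) ) ≤ δ, and P( μ − (1/n)·∑_{i=1}^n X_i ≥ √(2·g(μ)·log(1/δ)/n) ) ≤ δ. -/

import Mathlib

open MeasureTheory ProbabilityTheory

open Real

namespace KSAux

lemma monoOn {f f' : ℝ → ℝ} {D : Set ℝ} (hD : Convex ℝ D)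
    (hf : ∀ s, HasDerivAt f (f' s) s) (h : ∀ s ∈ interior D, 0 ≤ f' s) :
    MonotoneOn f D :=
  monotoneOn_of_deriv_nonneg hD (fun s _ => (hf s).continuousAt.continuousWithinAt)
    (fun s _ => (hf s).differentiableAt.differentiableWithinAt)
    (fun s hs => by rw [(hf s).deriv]; exact h s hs)

lemma antiOn {f f' : ℝ → ℝ} {D : Set ℝ} (hD : Convex ℝ D)
    (hf : ∀ s, HasDerivAt f (f' s) s) (h : ∀ s ∈ interior D, f' s ≤ 0) :
    AntitoneOn f D :=
  antitoneOn_of_deriv_nonpos hD (fun s _ => (hf s).continuousAt.continuousWithinAt)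
    (fun s _ => (hf s).differentiableAt.differentiableWithinAt)
    (fun s hs => by rw [(hf s).deriv]; exact h s hs)

lemma exp_sub_one_le (t : ℝ) : exp t - 1 ≤ t * exp t := by
  have h := Real.add_one_le_exp (-t)
  have he : (0:ℝ) < exp t := exp_pos t
  have : (-t + 1) * exp t ≤ exp (-t) * exp t := by nlinarith
  rw [← Real.exp_add, neg_add_cancel, Real.exp_zero] at this
  nlinarith

lemma log_le_half (x : ℝ) (hx : 1 ≤ x) : Real.log x ≤ (x - 1/x) / 2 := by
  have hx0 : (0:ℝ) < x := lt_of_lt_of_le one_pos hx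
  have hy : 0 ≤ Real.log x := Real.log_nonneg hx
  have hs : Real.log x ≤ Real.sinh (Real.log x) := by
    rcases eq_or_lt_of_le hy with h | h
    · rw [← h]; simp
    · exact (Real.self_lt_sinh_iff.2 h).le
  calc Real.log x ≤ Real.sinh (Real.log x) := hs
    _ = (x - 1/x)/2 := by
        rw [Real.sinh_eq, Real.exp_log hx0, Real.exp_neg, Real.exp_log hx0]
        rw [one_div]

/-- `μ(1-μ) ≤ g(μ)` for `μ < 1/2`, in multiplied-out form. -/
lemma var_le_g {μ : ℝ} (h0 : 0 < μ) (hh : μ < 1/2) :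
    μ * (1 - μ) * Real.log (1/μ - 1) ≤ 1/2 - μ := by
  have h1 : μ < 1 := by linarith
  have hx : 1 ≤ 1/μ - 1 := by
    rw [le_sub_iff_add_le, le_div_iff₀ h0]; linarith
  have h := log_le_half _ hx
  have hkey : μ * (1 - μ) * ((1/μ - 1 - 1/(1/μ - 1)) / 2) = 1/2 - μ := by
    have hμ' : (1:ℝ)/μ - 1 ≠ 0 := by intro h'; rw [h'] at hx; linarith
    have hμ1 : (1:ℝ) - μ ≠ 0 := by intro h'; linarith
    field_simp
    ring
  nlinarith [Real.log_nonneg hx, mul_le_mul_of_nonneg_left h (by nlinarith : (0:ℝ) ≤ μ * (1 - μ))]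


/-- One-sided sub-Gaussian MGF bound for Bernoulli with `μ ≥ 1/2`, variance proxy `μ(1-μ)`. -/
lemma ks_high {μ t : ℝ} (h1 : μ < 1) (hh : 1/2 ≤ μ) (ht : 0 ≤ t) :
    (1 - μ) * exp (-(t*μ)) + μ * exp (t*(1-μ)) ≤ exp (μ*(1-μ)*t^2/2) := by
  have h0 : 0 < μ := by linarith
  set u : ℝ → ℝ := fun s => 1 - μ + μ * exp s with hu_def
  have hu : ∀ s, 0 < u s := fun s => by
    have := exp_pos s; simp only [hu_def]; nlinarith
  set c : ℝ := μ * (1 - μ) with hc_def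
  set G : ℝ → ℝ := fun s => c/2*s^2 + μ*s - Real.log (u s) with hG_def
  set G1 : ℝ → ℝ := fun s => c*s + μ - μ*exp s/u s with hG1_def
  have hu' : ∀ s, HasDerivAt u (μ * exp s) s := fun s =>
    ((Real.hasDerivAt_exp s).const_mul μ).const_add (1 - μ)
  have hG : ∀ s, HasDerivAt G (G1 s) s := by
    intro s
    have hlog : HasDerivAt (fun s => Real.log (u s)) (μ * exp s / u s) s :=
      (hu' s).log (hu s).ne'
    have hpoly : HasDerivAt (fun s : ℝ => c/2*s^2 + μ*s) (c*s + μ) s := by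
      have h2 : HasDerivAt (fun s : ℝ => s^2) (2*s) s := by
        simpa using hasDerivAt_pow 2 s
      have := (h2.const_mul (c/2)).add ((hasDerivAt_id s).const_mul μ)
      exact this.congr_deriv (by ring)
    exact hpoly.sub hlog
  -- the inner inequality : s * u s ≥ exp s - 1 for s ≥ 0
  have hf : ∀ s : ℝ, 0 ≤ s → exp s - 1 ≤ s * u s := by
    set f : ℝ → ℝ := fun s => s * u s - exp s + 1 with hf_def
    set f1 : ℝ → ℝ := fun s => u s + s * (μ * exp s) - exp s with hf1_def
    have hf' : ∀ s, HasDerivAt f (f1 s) s := by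
      intro s
      have := ((hasDerivAt_id s).mul (hu' s)).sub (Real.hasDerivAt_exp s)
      have h2 := this.add_const 1
      simp only [one_mul] at h2
      exact h2
    have hmono : MonotoneOn f (Set.Ici 0) := by
      apply monoOn (convex_Ici 0) hf'
      intro s hs
      rw [interior_Ici] at hs
      have hs0 : (0:ℝ) ≤ s := le_of_lt hs
      have h1' : exp s - 1 ≤ s * exp s := exp_sub_one_le s
      have h2' : 1 ≤ exp s := Real.one_le_exp hs0
      simp only [hf1_def, hu_def]
      nlinarith
    intro s hs
    have := hmono (Set.self_mem_Ici) (Set.mem_Ici.2 hs) hs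
    simp only [hf_def, hu_def] at this ⊢
    simp only [Real.exp_zero] at this
    nlinarith
  -- G1 ≥ 0 on [0, ∞)
  have hG1nn : ∀ s : ℝ, 0 ≤ s → 0 ≤ G1 s := by
    intro s hs
    have hus := hu s
    rw [hG1_def]
    have key : 0 ≤ ((c*s + μ) * u s - μ * exp s) / u s := by
      apply div_nonneg _ hus.le
      have h1' := hf s hs
      have h2' : μ * u s - μ * exp s = -(c * (exp s - 1)) := by
        simp only [hu_def, hc_def]; ring
      have hc0 : 0 ≤ c := by simp only [hc_def]; nlinarith
      nlinarith [mul_le_mul_of_nonneg_left h1' hc0]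
    calc (0:ℝ) ≤ ((c*s + μ) * u s - μ * exp s) / u s := key
      _ = c*s + μ - μ*exp s/u s := by field_simp
  -- G ≥ 0 on [0, ∞)
  have hGnn : 0 ≤ G t := by
    have hmono : MonotoneOn G (Set.Ici 0) := by
      apply monoOn (convex_Ici 0) hG
      intro s hs
      rw [interior_Ici] at hs
      exact hG1nn s hs.le
    have hG0 : G 0 = 0 := by
      simp [hG_def, hu_def]
    have := hmono (Set.self_mem_Ici) (Set.mem_Ici.2 ht) ht
    rw [hG0] at this
    exact this
  -- conclude
  have hlogu : Real.log (u t) ≤ c/2*t^2 + μ*t := by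
    simp only [hG_def] at hGnn; linarith
  have hut : u t ≤ exp (c/2*t^2 + μ*t) :=
    (Real.log_le_iff_le_exp (hu t)).1 hlogu
  have hexp : (1 - μ) * exp (-(t*μ)) + μ * exp (t*(1-μ)) = exp (-(t*μ)) * u t := by
    simp only [hu_def]
    rw [show t*(1-μ) = t + -(t*μ) by ring, Real.exp_add]
    ring
  rw [hexp]
  calc exp (-(t*μ)) * u t ≤ exp (-(t*μ)) * exp (c/2*t^2 + μ*t) := by
        exact mul_le_mul_of_nonneg_left hut (exp_pos _).le
    _ = exp (μ*(1-μ)*t^2/2) := by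
        rw [← Real.exp_add]
        congr 1
        simp only [hc_def]
        ring


/-- Kearns–Saul sub-Gaussian MGF bound for Bernoulli with `μ < 1/2`. -/
lemma ks_low {μ t : ℝ} (h0 : 0 < μ) (hh : μ < 1/2) (ht : 0 ≤ t) :
    (1 - μ) * exp (-(t*μ)) + μ * exp (t*(1-μ)) ≤
      exp ((1/2 - μ) / Real.log (1/μ - 1) * t^2 / 2) := by
  have h1 : μ < 1 := by linarith
  have h1' : (0:ℝ) < 1 - μ := by linarith
  have hxgt : (1:ℝ) < 1/μ - 1 := by
    rw [lt_sub_iff_add_lt, lt_div_iff₀ h0]; linarith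
  set L : ℝ := Real.log (1/μ - 1) with hL_def
  have hL : 0 < L := Real.log_pos hxgt
  have hexpL : exp L = (1 - μ)/μ := by
    rw [hL_def, Real.exp_log (by linarith : (0:ℝ) < 1/μ - 1)]
    field_simp
  set c : ℝ := (1/2 - μ) / L with hc_def
  have hc : 0 < c := div_pos (by linarith) hL
  set u : ℝ → ℝ := fun s => 1 - μ + μ * exp s with hu_def
  have hu : ∀ s, 0 < u s := fun s => by
    have := exp_pos s; simp only [hu_def]; nlinarith
  set F : ℝ → ℝ := fun s => c/2*s^2 + μ*s - Real.log (u s) with hF_def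
  set F1 : ℝ → ℝ := fun s => c*s + μ - μ*exp s/u s with hF1_def
  set F2 : ℝ → ℝ := fun s => c - 1/(2 + 2*Real.cosh (s - L)) with hF2_def
  have hu' : ∀ s, HasDerivAt u (μ * exp s) s := fun s =>
    ((Real.hasDerivAt_exp s).const_mul μ).const_add (1 - μ)
  have hF : ∀ s, HasDerivAt F (F1 s) s := by
    intro s
    have hlog : HasDerivAt (fun s => Real.log (u s)) (μ * exp s / u s) s :=
      (hu' s).log (hu s).ne'
    have hpoly : HasDerivAt (fun s : ℝ => c/2*s^2 + μ*s) (c*s + μ) s := by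
      have h2 : HasDerivAt (fun s : ℝ => s^2) (2*s) s := by
        simpa using hasDerivAt_pow 2 s
      have := (h2.const_mul (c/2)).add ((hasDerivAt_id s).const_mul μ)
      exact this.congr_deriv (by ring)
    exact hpoly.sub hlog
  have hF1 : ∀ s, HasDerivAt F1 (F2 s) s := by
    intro s
    have hq : HasDerivAt (fun s => μ*exp s/u s)
        ((μ * exp s * u s - μ * exp s * (μ * exp s)) / (u s)^2) s :=
      ((Real.hasDerivAt_exp s).const_mul μ).div (hu' s) (hu s).ne'
    have hlin : HasDerivAt (fun s : ℝ => c*s + μ) c s := by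
      simpa using ((hasDerivAt_id s).const_mul c).add_const μ
    have hd := hlin.sub hq
    refine hd.congr_deriv (Eq.symm ?_)
    have hnum : μ * exp s * u s - μ * exp s * (μ * exp s) = μ*(1-μ)*exp s := by
      simp only [hu_def]; ring
    rw [hnum]
    show c - 1/(2 + 2*Real.cosh (s - L)) = c - μ*(1-μ)*exp s / u s ^ 2
    have hden : 2 + 2*Real.cosh (s - L) = (u s)^2 / (μ*(1-μ)*exp s) := by
      rw [Real.cosh_eq]
      have e1 : exp (s - L) = exp s * μ / (1 - μ) := by
        rw [Real.exp_sub, hexpL]; field_simp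
      have e2 : exp (-(s - L)) = (1 - μ) / (μ * exp s) := by
        rw [neg_sub, Real.exp_sub, hexpL, div_div]
      rw [e1, e2]
      have hes := (exp_pos s).ne'
      simp only [hu_def]
      field_simp
      ring
    rw [hden, one_div_div]
  -- values
  have huL : u L = 2*(1 - μ) := by
    simp only [hu_def, hexpL]; field_simp; ring
  have hu2L : u (2*L) = (1 - μ)/μ := by
    simp only [hu_def]
    rw [show (2:ℝ)*L = L + L by ring, Real.exp_add, hexpL]
    field_simp
    ring
  have hcL : c * L = 1/2 - μ := by
    rw [hc_def, div_mul_cancel₀ _ hL.ne']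
  have hF10 : F1 0 = 0 := by
    simp [hF1_def, hu_def]
  have hF1L : F1 L = 0 := by
    simp only [hF1_def]
    rw [huL, hexpL, hcL]
    field_simp
    ring
  have hF12L : F1 (2*L) = 0 := by
    simp only [hF1_def]
    rw [hu2L, show (2:ℝ)*L = L + L by ring, Real.exp_add, hexpL]
    have : c * (L + L) = 1 - 2*μ := by rw [mul_add, hcL]; ring
    rw [this]
    field_simp
    ring
  have hF0 : F 0 = 0 := by simp [hF_def, hu_def]
  have hF2Lval : F (2*L) = 0 := by
    simp only [hF_def]
    rw [hu2L, ← hexpL, Real.log_exp]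
    have : c/2*(2*L)^2 = (c*L)*(2*L) := by ring
    rw [this, hcL]
    ring
  -- monotonicity of F2
  have hcoshpos : ∀ x : ℝ, (0:ℝ) < 2 + 2*Real.cosh x := fun x => by
    nlinarith [Real.cosh_pos (x := x)]
  have hF2anti : ∀ a ∈ Set.Iic L, ∀ b ∈ Set.Iic L, a ≤ b → F2 b ≤ F2 a := by
    intro a ha b hb hab
    simp only [hF2_def]
    have hcc : Real.cosh (b - L) ≤ Real.cosh (a - L) := by
      rw [Real.cosh_le_cosh]
      rw [Set.mem_Iic] at ha hb
      rw [abs_of_nonpos (by linarith), abs_of_nonpos (by linarith)]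
      linarith
    have h2 : 2 + 2*Real.cosh (b - L) ≤ 2 + 2*Real.cosh (a - L) := by linarith
    have := one_div_le_one_div_of_le (hcoshpos (b - L)) h2
    linarith
  have hF2mono : ∀ a ∈ Set.Ici L, ∀ b ∈ Set.Ici L, a ≤ b → F2 a ≤ F2 b := by
    intro a ha b hb hab
    simp only [hF2_def]
    have hcc : Real.cosh (a - L) ≤ Real.cosh (b - L) := by
      rw [Real.cosh_le_cosh]
      rw [Set.mem_Ici] at ha hb
      rw [abs_of_nonneg (by linarith), abs_of_nonneg (by linarith)]
      linarith
    have h2 : 2 + 2*Real.cosh (a - L) ≤ 2 + 2*Real.cosh (b - L) := by linarith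
    have := one_div_le_one_div_of_le (hcoshpos (a - L)) h2
    linarith
  -- concavity / convexity of F1
  have hcont : ∀ (D : Set ℝ), ContinuousOn F1 D := fun D =>
    fun s _ => (hF1 s).continuousAt.continuousWithinAt
  have hdiff : ∀ (D : Set ℝ), DifferentiableOn ℝ F1 D := fun D =>
    fun s _ => (hF1 s).differentiableAt.differentiableWithinAt
  have hconc : ConcaveOn ℝ (Set.Icc 0 L) F1 := by
    apply AntitoneOn.concaveOn_of_deriv (convex_Icc 0 L) (hcont _) (hdiff _)
    intro a ha b hb hab
    rw [(hF1 a).deriv, (hF1 b).deriv]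
    rw [interior_Icc] at ha hb
    exact hF2anti a (Set.mem_Iic.2 ha.2.le) b (Set.mem_Iic.2 hb.2.le) hab
  have hconv : ConvexOn ℝ (Set.Ici L) F1 := by
    apply MonotoneOn.convexOn_of_deriv (convex_Ici L) (hcont _) (hdiff _)
    intro a ha b hb hab
    rw [(hF1 a).deriv, (hF1 b).deriv]
    rw [interior_Ici] at ha hb
    exact hF2mono a (Set.mem_Ici.2 ha.le) b (Set.mem_Ici.2 hb.le) hab
  -- sign of F1
  have hsign1 : ∀ s ∈ Set.Icc (0:ℝ) L, 0 ≤ F1 s := by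
    intro s hs
    have := hconc.ge_on_segment (Set.left_mem_Icc.2 hL.le) (Set.right_mem_Icc.2 hL.le)
      (by rwa [segment_eq_Icc hL.le])
    rwa [hF10, hF1L, min_self] at this
  have hsign2 : ∀ s ∈ Set.Icc L (2*L), F1 s ≤ 0 := by
    intro s hs
    have h2L : L ≤ 2*L := by linarith
    have := hconv.le_on_segment (Set.self_mem_Ici) (Set.mem_Ici.2 h2L)
      (by rwa [segment_eq_Icc h2L])
    rwa [hF1L, hF12L, max_self] at this
  have hsign3 : ∀ s ∈ Set.Ici (2*L), 0 ≤ F1 s := by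
    intro s hs
    rw [Set.mem_Ici] at hs
    rcases eq_or_lt_of_le hs with h | h
    · rw [← h, hF12L]
    · have hsL : L < s := by linarith
      have hden : (0:ℝ) < s - L := by linarith
      set a : ℝ := (s - 2*L)/(s - L) with ha_def
      set b : ℝ := L/(s - L) with hb_def
      have ha : 0 ≤ a := div_nonneg (by linarith) hden.le
      have hb : 0 ≤ b := div_nonneg hL.le hden.le
      have hb' : 0 < b := div_pos hL hden
      have hab : a + b = 1 := by
        rw [ha_def, hb_def, ← add_div, div_eq_one_iff_eq hden.ne']
        ring
      have hcomb : a • L + b • s = 2*L := by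
        simp only [smul_eq_mul, ha_def, hb_def]
        field_simp
        ring
      have := hconv.2 (Set.self_mem_Ici) (Set.mem_Ici.2 hsL.le) ha hb hab
      rw [hcomb, hF12L, hF1L, smul_eq_mul, smul_eq_mul, mul_zero, zero_add] at this
      exact nonneg_of_mul_nonneg_right this hb'
  -- F ≥ 0 on [0, ∞)
  have hFnn : 0 ≤ F t := by
    rcases le_or_gt t L with hcase | hcase
    · have hmono : MonotoneOn F (Set.Icc 0 L) := by
        apply monoOn (convex_Icc 0 L) hF
        intro s hs
        rw [interior_Icc] at hs
        exact hsign1 s (Set.mem_Icc.2 ⟨hs.1.le, hs.2.le⟩)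
      have := hmono (Set.mem_Icc.2 ⟨le_refl 0, hL.le⟩) (Set.mem_Icc.2 ⟨ht, hcase⟩) ht
      rwa [hF0] at this
    · rcases le_or_gt t (2*L) with hcase2 | hcase2
      · have hanti : AntitoneOn F (Set.Icc L (2*L)) := by
          apply antiOn (convex_Icc L (2*L)) hF
          intro s hs
          rw [interior_Icc] at hs
          exact hsign2 s (Set.mem_Icc.2 ⟨hs.1.le, hs.2.le⟩)
        have := hanti (Set.mem_Icc.2 ⟨hcase.le, hcase2⟩)
          (Set.mem_Icc.2 ⟨(by linarith), le_refl (2*L)⟩) hcase2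
        rwa [hF2Lval] at this
      · have hmono : MonotoneOn F (Set.Ici (2*L)) := by
          apply monoOn (convex_Ici (2*L)) hF
          intro s hs
          rw [interior_Ici] at hs
          exact hsign3 s (Set.mem_Ici.2 hs.le)
        have := hmono (Set.self_mem_Ici) (Set.mem_Ici.2 hcase2.le) hcase2.le
        rwa [hF2Lval] at this
  -- conclude
  have hlogu : Real.log (u t) ≤ c/2*t^2 + μ*t := by
    simp only [hF_def] at hFnn; linarith
  have hut : u t ≤ exp (c/2*t^2 + μ*t) :=
    (Real.log_le_iff_le_exp (hu t)).1 hlogu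
  have hexp : (1 - μ) * exp (-(t*μ)) + μ * exp (t*(1-μ)) = exp (-(t*μ)) * u t := by
    simp only [hu_def]
    rw [show t*(1-μ) = t + -(t*μ) by ring, Real.exp_add]
    ring
  rw [hexp]
  calc exp (-(t*μ)) * u t ≤ exp (-(t*μ)) * exp (c/2*t^2 + μ*t) :=
        mul_le_mul_of_nonneg_left hut (exp_pos _).le
    _ = exp ((1/2 - μ) / Real.log (1/μ - 1) * t^2 / 2) := by
        rw [← Real.exp_add]
        congr 1
        rw [← hL_def, ← hc_def]
        ring


/-- Expectation of `f ∘ X` for a Bernoulli(μ) random variable. -/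
lemma bernoulli_integral {Ω : Type*} [MeasurableSpace Ω] (P : Measure Ω) [IsProbabilityMeasure P]
    {X : Ω → ℝ} (hX : Measurable X) (hvals : ∀ᵐ ω ∂P, X ω = 0 ∨ X ω = 1)
    {μ : ℝ} (hμ0 : 0 ≤ μ) (hbern : P {ω | X ω = 1} = ENNReal.ofReal μ)
    (f : ℝ → ℝ) :
    Integrable (fun ω => f (X ω)) P ∧ ∫ ω, f (X ω) ∂P = (1-μ) * f 0 + μ * f 1 := by
  have hA : MeasurableSet {ω | X ω = 1} := hX (measurableSet_singleton 1)
  have hXind : X =ᵐ[P] Set.indicator {ω | X ω = 1} (fun _ => (1:ℝ)) := by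
    filter_upwards [hvals] with ω hω
    rcases hω with h | h
    · rw [h, Set.indicator_of_notMem]
      simp only [Set.mem_setOf_eq, h]
      norm_num
    · rw [h, Set.indicator_of_mem]
      exact h
  have hXint : Integrable X P :=
    ((integrable_const (1:ℝ)).indicator hA).congr hXind.symm
  have hXmean : ∫ ω, X ω ∂P = μ := by
    rw [integral_congr_ae hXind, integral_indicator_const _ hA, measureReal_def, hbern]
    simp [ENNReal.toReal_ofReal hμ0]
  have haff : (fun ω => f (X ω)) =ᵐ[P] fun ω => f 0 + (f 1 - f 0) * X ω := by
    filter_upwards [hvals] with ω hω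
    rcases hω with h | h <;> rw [h] <;> ring
  have hrhsint : Integrable (fun ω => f 0 + (f 1 - f 0) * X ω) P :=
    (integrable_const (f 0)).add (hXint.const_mul _)
  constructor
  · exact hrhsint.congr haff.symm
  · rw [integral_congr_ae haff, integral_add (integrable_const _) (hXint.const_mul _),
      integral_const, integral_const_mul, hXmean]
    simp only [probReal_univ, measure_univ, ENNReal.toReal_one, smul_eq_mul, one_mul]
    ring

/-- Chernoff bound given a uniform sub-Gaussian MGF bound. -/
lemma chernoff {Ω : Type*} [MeasurableSpace Ω] (P : Measure Ω) [IsProbabilityMeasure P]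
    {n : ℕ} (hn : 0 < n) (Y : Fin n → Ω → ℝ) (hmeas : ∀ i, Measurable (Y i))
    (hindep : iIndepFun Y P)
    {c δ : ℝ} (hc : 0 < c) (hδ0 : 0 < δ) (hδ1 : δ < 1)
    (hint : ∀ i t, Integrable (fun ω => exp (t * Y i ω)) P)
    (hmgf : ∀ (i : Fin n) (t : ℝ), 0 ≤ t → mgf (Y i) P t ≤ exp (c * t^2 / 2)) :
    P {ω | (n:ℝ) * Real.sqrt (2*c*Real.log (1/δ)/n) ≤ ∑ i, Y i ω} ≤ ENNReal.ofReal δ := by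
  have hlog : 0 < Real.log (1/δ) := Real.log_pos (by rw [lt_div_iff₀ hδ0]; linarith)
  have hnpos : (0:ℝ) < n := Nat.cast_pos.2 hn
  set ε : ℝ := Real.sqrt (2*c*Real.log (1/δ)/n) with hε_def
  have hε2 : ε^2 = 2*c*Real.log (1/δ)/n := Real.sq_sqrt (by positivity)
  have hε : 0 < ε := Real.sqrt_pos.2 (by positivity)
  set t : ℝ := ε / c with ht_def
  have ht : 0 < t := div_pos hε hc
  set S : Ω → ℝ := ∑ i, Y i with hS_def
  have hSint : Integrable (fun ω => exp (t * S ω)) P :=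
    hindep.integrable_exp_mul_sum hmeas (fun i _ => hint i t)
  have hcher := measure_ge_le_exp_mul_mgf (X := S) (μ := P) ((n:ℝ) * ε) ht.le hSint
  have hmgfS : mgf S P t ≤ exp ((n:ℝ) * (c * t^2 / 2)) := by
    rw [hS_def, iIndepFun.mgf_sum hindep hmeas]
    calc ∏ i : Fin n, mgf (Y i) P t ≤ ∏ _i : Fin n, exp (c * t^2 / 2) :=
          Finset.prod_le_prod (fun i _ => mgf_nonneg) (fun i _ => hmgf i t ht.le)
      _ = exp ((n:ℝ) * (c * t^2 / 2)) := by
          rw [Finset.prod_const, ← Real.exp_nat_mul]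
          simp
  have hbound : (P {ω | (n:ℝ) * ε ≤ S ω}).toReal ≤ δ := by
    refine hcher.trans ?_
    calc exp (-t * ((n:ℝ)*ε)) * mgf S P t ≤ exp (-t * ((n:ℝ)*ε)) * exp ((n:ℝ) * (c * t^2/2)) :=
          mul_le_mul_of_nonneg_left hmgfS (exp_pos _).le
      _ = exp (-(n:ℝ)*ε^2/(2*c)) := by
          rw [← Real.exp_add]
          congr 1
          rw [ht_def]
          field_simp
          ring
      _ = δ := by
          rw [hε2]
          rw [show -(n:ℝ) * (2*c*Real.log (1/δ)/(n:ℝ)) / (2*c) = -Real.log (1/δ) by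
            field_simp]
          rw [Real.log_div one_ne_zero hδ0.ne', Real.log_one]
          simp [Real.exp_log hδ0]
  have hset : {ω | (n:ℝ) * ε ≤ ∑ i, Y i ω} = {ω | (n:ℝ) * ε ≤ S ω} := by
    ext ω
    simp [hS_def]
  rw [hset]
  exact (ENNReal.le_ofReal_iff_toReal_le (measure_ne_top P _) hδ0.le).2 hbound


/-- Tail bound in empirical-mean form. -/
lemma tail_aux {Ω : Type*} [MeasurableSpace Ω] (P : Measure Ω) [IsProbabilityMeasure P]
    {n : ℕ} (hn : 0 < n) (Y : Fin n → Ω → ℝ) (hmeas : ∀ i, Measurable (Y i))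
    (hindep : iIndepFun Y P)
    {c δ : ℝ} (hc : 0 < c) (hδ0 : 0 < δ) (hδ1 : δ < 1)
    (hint : ∀ i t, Integrable (fun ω => exp (t * Y i ω)) P)
    (hmgf : ∀ (i : Fin n) (t : ℝ), 0 ≤ t → mgf (Y i) P t ≤ exp (c * t^2 / 2)) :
    P {ω | (1/n : ℝ) * ∑ i, Y i ω ≥ Real.sqrt (2*c*Real.log (1/δ)/n)} ≤ ENNReal.ofReal δ := by
  have h := chernoff P hn Y hmeas hindep hc hδ0 hδ1 hint hmgf
  have hnpos : (0:ℝ) < n := Nat.cast_pos.2 hn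
  have hset : {ω | (1/n : ℝ) * ∑ i, Y i ω ≥ Real.sqrt (2*c*Real.log (1/δ)/n)} =
      {ω | (n:ℝ) * Real.sqrt (2*c*Real.log (1/δ)/n) ≤ ∑ i, Y i ω} := by
    ext ω
    simp only [Set.mem_setOf_eq, ge_iff_le]
    rw [show (1/(n:ℝ)) * ∑ i, Y i ω = (∑ i, Y i ω) / n by ring, le_div_iff₀ hnpos, mul_comm]
  rw [hset]
  exact h

end KSAux

open KSAux

/-- One-sided concentration of Bernoulli empirical means via the Kearns–Saul
bound: with `g(μ) = (1/2 − μ)/log(1/μ − 1)` and `g̲(μ) = g(μ)` if `μ < 1/2`,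
`g̲(μ) = μ(1−μ)` otherwise, both the right tail (with `g̲`) and the left tail
(with `g`) of the empirical mean of `n` i.i.d. Bernoulli(μ) variables are
bounded by `δ` at level `√(2·(·)·log(1/δ)/n)`. -/
theorem bernoulli_one_sided_concentration
    {Ω : Type*} [MeasurableSpace Ω] (P : Measure Ω) [IsProbabilityMeasure P]
    (n : ℕ) (hn : 0 < n)
    (μ : ℝ) (hμ0 : 0 < μ) (hμ1 : μ < 1) (hμ : μ ≠ 1/2)
    (X : Fin n → Ω → ℝ)
    (hmeas : ∀ i, Measurable (X i))
    (hindep : iIndepFun X P)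
    (hvals : ∀ i, ∀ᵐ ω ∂P, X i ω = 0 ∨ X i ω = 1)
    (hbern : ∀ i, P {ω | X i ω = 1} = ENNReal.ofReal μ)
    (δ : ℝ) (hδ0 : 0 < δ) (hδ1 : δ < 1) :
    P {ω | (1/n : ℝ) * ∑ i, X i ω - μ ≥
        Real.sqrt (2 * (if μ < 1/2 then (1/2 - μ) / Real.log (1/μ - 1)
          else μ * (1 - μ)) * Real.log (1/δ) / n)}
      ≤ ENNReal.ofReal δ ∧
    P {ω | μ - (1/n : ℝ) * ∑ i, X i ω ≥
        Real.sqrt (2 * ((1/2 - μ) / Real.log (1/μ - 1)) * Real.log (1/δ) / n)}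
      ≤ ENNReal.ofReal δ := by
  have hnpos : (0:ℝ) < n := Nat.cast_pos.2 hn
  -- the `g` constant is positive for all μ ≠ 1/2
  have hgpos : 0 < (1/2 - μ) / Real.log (1/μ - 1) := by
    rcases lt_or_gt_of_ne hμ with h | h
    · apply div_pos (by linarith)
      apply Real.log_pos
      rw [lt_sub_iff_add_lt, lt_div_iff₀ hμ0]; linarith
    · rw [div_pos_iff]
      right
      constructor
      · linarith
      · apply Real.log_neg
        · rw [sub_pos, lt_div_iff₀ hμ0]; linarith
        · rw [sub_lt_iff_lt_add, div_lt_iff₀ hμ0]; linarith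
  -- MGF formulas
  have hmgf_right : ∀ (i : Fin n) (t : ℝ),
      mgf (fun ω => X i ω - μ) P t = (1-μ) * exp (-(t*μ)) + μ * exp (t*(1-μ)) := by
    intro i t
    have h2 := (bernoulli_integral P (hmeas i) (hvals i) hμ0.le (hbern i)
      (fun z => Real.exp (t*(z-μ)))).2
    rw [show t*((0:ℝ)-μ) = -(t*μ) by ring] at h2
    rw [show t*((1:ℝ)-μ) = t*(1-μ) by ring] at h2
    exact h2
  have hmgf_left : ∀ (i : Fin n) (t : ℝ),
      mgf (fun ω => μ - X i ω) P t = (1-μ) * exp (t*μ) + μ * exp (-(t*(1-μ))) := by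
    intro i t
    have h2 := (bernoulli_integral P (hmeas i) (hvals i) hμ0.le (hbern i)
      (fun z => Real.exp (t*(μ-z)))).2
    rw [show t*(μ-(0:ℝ)) = t*μ by ring] at h2
    rw [show t*(μ-(1:ℝ)) = -(t*(1-μ)) by ring] at h2
    exact h2
  have hint_right : ∀ (i : Fin n) (t : ℝ),
      Integrable (fun ω => exp (t * (X i ω - μ))) P :=
    fun i t => (bernoulli_integral P (hmeas i) (hvals i) hμ0.le (hbern i)
      (fun z => Real.exp (t*(z-μ)))).1
  have hint_left : ∀ (i : Fin n) (t : ℝ),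
      Integrable (fun ω => exp (t * (μ - X i ω))) P :=
    fun i t => (bernoulli_integral P (hmeas i) (hvals i) hμ0.le (hbern i)
      (fun z => Real.exp (t*(μ-z)))).1
  have hYmeas : ∀ i, Measurable (fun ω => X i ω - μ) :=
    fun i => (hmeas i).sub measurable_const
  have hZmeas : ∀ i, Measurable (fun ω => μ - X i ω) :=
    fun i => measurable_const.sub (hmeas i)
  have hYindep : iIndepFun (fun i => fun ω => X i ω - μ) P :=
    hindep.comp (fun _ => fun x => x - μ) (fun _ => measurable_id.sub measurable_const)
  have hZindep : iIndepFun (fun i => fun ω => μ - X i ω) P :=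
    hindep.comp (fun _ => fun x => μ - x) (fun _ => measurable_const.sub measurable_id)
  constructor
  · -- right tail
    set c : ℝ := if μ < 1/2 then (1/2 - μ) / Real.log (1/μ - 1) else μ * (1 - μ) with hc_def
    have hc : 0 < c := by
      rw [hc_def]
      split_ifs with h
      · exact hgpos
      · push_neg at h
        nlinarith
    have hmgfY : ∀ (i : Fin n) (t : ℝ), 0 ≤ t →
        mgf (fun ω => X i ω - μ) P t ≤ exp (c * t^2 / 2) := by
      intro i t ht
      rw [hmgf_right i t, hc_def]
      split_ifs with h
      · exact ks_low hμ0 h ht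
      · push_neg at h
        have := ks_high hμ1 h ht
        calc (1-μ) * exp (-(t*μ)) + μ * exp (t*(1-μ)) ≤ exp (μ*(1-μ)*t^2/2) := this
          _ = exp (μ*(1-μ)*t^2/2) := rfl
    have htail := tail_aux P hn (fun i => fun ω => X i ω - μ) hYmeas hYindep hc hδ0 hδ1
      (fun i t => hint_right i t) hmgfY
    have hset : {ω | (1/n : ℝ) * ∑ i, X i ω - μ ≥ Real.sqrt (2 * c * Real.log (1/δ) / n)} =
        {ω | (1/n : ℝ) * ∑ i, (X i ω - μ) ≥ Real.sqrt (2 * c * Real.log (1/δ) / n)} := by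
      ext ω
      simp only [Set.mem_setOf_eq, ge_iff_le]
      have hsum : ∑ i, (X i ω - μ) = (∑ i, X i ω) - n*μ := by
        rw [Finset.sum_sub_distrib]
        simp [Finset.card_univ, mul_comm]
      rw [hsum, show (1/(n:ℝ)) * ((∑ i, X i ω) - n*μ) = (1/n) * ∑ i, X i ω - μ by
        field_simp]
    rw [hset]
    exact htail
  · -- left tail
    set c : ℝ := (1/2 - μ) / Real.log (1/μ - 1) with hc_def
    have hmgfZ : ∀ (i : Fin n) (t : ℝ), 0 ≤ t →
        mgf (fun ω => μ - X i ω) P t ≤ exp (c * t^2 / 2) := by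
      intro i t ht
      rw [hmgf_left i t]
      rcases lt_or_gt_of_ne hμ with h | h
      · -- μ < 1/2 : use ks_high for 1-μ ≥ 1/2, then μ(1-μ) ≤ c
        have hks := ks_high (μ := 1-μ) (by linarith) (by linarith) ht
        rw [show (1:ℝ)-(1-μ) = μ by ring] at hks
        have hvle : μ * (1-μ) ≤ c := by
          rw [hc_def, le_div_iff₀ (Real.log_pos (by
            rw [lt_sub_iff_add_lt, lt_div_iff₀ hμ0]; linarith))]
          exact var_le_g hμ0 h
        calc (1-μ) * exp (t*μ) + μ * exp (-(t*(1-μ)))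
            = μ * exp (-(t*(1-μ))) + (1-μ) * exp (t*μ) := by ring
          _ ≤ exp ((1-μ)*μ*t^2/2) := hks
          _ ≤ exp (c * t^2 / 2) := by
              rw [Real.exp_le_exp]
              nlinarith [sq_nonneg t]
      · -- μ > 1/2 : use ks_low for 1-μ < 1/2
        have hks := ks_low (μ := 1-μ) (by linarith) (by linarith) ht
        rw [show (1:ℝ)-(1-μ) = μ by ring] at hks
        have heq : (1/2 - (1-μ)) / Real.log (1/(1-μ) - 1) = c := by
          have h1μ : (0:ℝ) < 1 - μ := by linarith
          have harg : 1/(1-μ) - 1 = (1/μ - 1)⁻¹ := by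
            rw [inv_eq_one_div]
            field_simp
            ring
          rw [harg, Real.log_inv, show (1:ℝ)/2 - (1-μ) = -(1/2 - μ) by ring,
            neg_div_neg_eq, hc_def]
        rw [heq] at hks
        calc (1-μ) * exp (t*μ) + μ * exp (-(t*(1-μ)))
            = μ * exp (-(t*(1-μ))) + (1-μ) * exp (t*μ) := by ring
          _ ≤ exp (c * t^2 / 2) := hks
    have htail := tail_aux P hn (fun i => fun ω => μ - X i ω) hZmeas hZindep hgpos hδ0 hδ1
      (fun i t => hint_left i t) hmgfZ
    have hset : {ω | μ - (1/n : ℝ) * ∑ i, X i ω ≥ Real.sqrt (2 * c * Real.log (1/δ) / n)} =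
        {ω | (1/n : ℝ) * ∑ i, (μ - X i ω) ≥ Real.sqrt (2 * c * Real.log (1/δ) / n)} := by
      ext ω
      simp only [Set.mem_setOf_eq, ge_iff_le]
      have hsum : ∑ i, (μ - X i ω) = n*μ - ∑ i, X i ω := by
        rw [Finset.sum_sub_distrib]
        simp [Finset.card_univ, mul_comm]
      rw [hsum, show (1/(n:ℝ)) * ((n:ℝ)*μ - ∑ i, X i ω) = μ - (1/n) * ∑ i, X i ω by
        field_simp]
    rw [hset]
    exact htail
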